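/- The series of H(k)^2/(k(k+1)) over positive integers k converges to 3ζ(3). -/

import Mathlib

open scoped BigOperators

open Finset Filter

/-- The harmonic number `H k = ∑_{j=1}^k 1/j`. -/
noncomputable def H (k : ℕ) : ℝ := ∑ j ∈ Finset.Icc 1 k, (1 : ℝ) / j

/-- The generalized harmonic number `H^{(p)} k = ∑_{j=1}^k 1/j^p`. -/
noncomputable def Hgen (p k : ℕ) : ℝ := ∑ j ∈ Finset.Icc 1 k, (1 : ℝ) / (j : ℝ) ^ p

lemma H_succ (n : ℕ) : H (n+1) = H n + 1/((n:ℝ)+1) := by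
  unfold H
  rw [Finset.sum_Icc_succ_top (by omega)]
  push_cast; ring

lemma H_eq (n : ℕ) : H n = ∑ j ∈ Finset.range n, 1/((j:ℝ)+1) := by
  induction n with
  | zero => simp [H]
  | succ n ih => rw [H_succ, Finset.sum_range_succ, ih]

lemma H_nonneg (n : ℕ) : 0 ≤ H n := by
  rw [H_eq]; positivity

lemma H_le_log (n : ℕ) : H n ≤ 1 + Real.log n := by
  induction n with
  | zero => simp [H]
  | succ n ih =>
    rcases Nat.eq_zero_or_pos n with h | h
    · subst h; norm_num [H_succ, H]
    · have hn : (0:ℝ) < n := by exact_mod_cast h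
      have key : Real.log n + 1/((n:ℝ)+1) ≤ Real.log ((n:ℕ)+1 : ℕ) := by
        have h1 : Real.log ((n:ℝ)/((n:ℝ)+1)) ≤ (n:ℝ)/((n:ℝ)+1) - 1 :=
          Real.log_le_sub_one_of_pos (by positivity)
        rw [Real.log_div (by positivity) (by positivity)] at h1
        push_cast
        have : (n:ℝ)/((n:ℝ)+1) - 1 = -(1/((n:ℝ)+1)) := by field_simp; ring
        rw [this] at h1
        linarith
      rw [H_succ]
      push_cast at key ⊢
      linarith

lemma sumE : Summable (fun n : ℕ => H (n+1) / ((n:ℝ)+1)^2) := by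
  have hs : Summable (fun n : ℕ => 3 / ((n:ℝ)+1)^((3:ℝ)/2)) := by
    have h1 := (Real.summable_one_div_nat_rpow (p := (3:ℝ)/2)).mpr (by norm_num)
    have h2 := (summable_nat_add_iff 1).mpr h1
    have h3 : Summable (fun n : ℕ => 1 / ((n:ℝ)+1)^((3:ℝ)/2)) := by
      refine h2.congr fun n => ?_
      push_cast; ring_nf
    simpa [div_eq_mul_inv] using h3.mul_left 3
  refine Summable.of_nonneg_of_le (fun n => div_nonneg (H_nonneg _) (by positivity)) (fun n => ?_) hs
  set x : ℝ := (n:ℝ)+1 with hx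
  have hx1 : (1:ℝ) ≤ x := by rw [hx]; have := Nat.cast_nonneg (α:=ℝ) n; linarith
  have hx0 : (0:ℝ) < x := by linarith
  have h1 : H (n+1) ≤ 1 + Real.log x := by
    rw [hx]; have := H_le_log (n+1); push_cast at this; exact this
  have h2 : Real.log x ≤ 2 * Real.sqrt x := by
    have ha : Real.log (Real.sqrt x) ≤ Real.sqrt x - 1 :=
      Real.log_le_sub_one_of_pos (Real.sqrt_pos.mpr hx0)
    rw [Real.log_sqrt hx0.le] at ha
    nlinarith [Real.sqrt_nonneg x]
  have h3 : (1:ℝ) ≤ Real.sqrt x := Real.one_le_sqrt.mpr hx1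
  have h4 : H (n+1) ≤ 3 * Real.sqrt x := by linarith
  have hxx : x ^ ((3:ℝ)/2) * Real.sqrt x = x^2 := by
    rw [Real.sqrt_eq_rpow, ← Real.rpow_add hx0, ← Real.rpow_natCast x 2]; norm_num
  have e1 : x^2 ≠ 0 := by positivity
  have e2 : x^((3:ℝ)/2) ≠ 0 := by positivity
  have h5 : Real.sqrt x / x^2 = 1 / x^((3:ℝ)/2) := by
    field_simp
    nlinarith [hxx]
  calc H (n+1) / x^2 ≤ (3 * Real.sqrt x) / x^2 := by
        apply div_le_div_of_nonneg_right h4 (by positivity) |>.trans_eq rfl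
    _ = 3 * (Real.sqrt x / x^2) := by ring
    _ = 3 / x^((3:ℝ)/2) := by rw [h5]; ring

noncomputable def z3 : ℝ := ∑' n : ℕ, 1/((n:ℝ)+1)^3

lemma z3_summable : Summable fun n : ℕ => 1/((n:ℝ)+1)^3 := by
  have h1 := (Real.summable_one_div_nat_pow (p := 3)).mpr (by norm_num)
  have h2 := (summable_nat_add_iff 1).mpr h1
  refine h2.congr fun n => ?_
  push_cast; ring

lemma hz3 : HasSum (fun n : ℕ => 1/((n:ℝ)+1)^3) z3 := z3_summable.hasSum

lemma tele (J : ℕ) :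
    HasSum (fun k : ℕ => 1/((k:ℝ)+1) - 1/((k:ℝ)+1+(J:ℝ))) (H J) := by
  have hnn : ∀ k : ℕ, 0 ≤ 1/((k:ℝ)+1) - 1/((k:ℝ)+1+(J:ℝ)) := by
    intro k
    have h1 : (0:ℝ) < (k:ℝ)+1 := by positivity
    have h2 : ((k:ℝ)+1) ≤ ((k:ℝ)+1+(J:ℝ)) := by
      have := Nat.cast_nonneg (α:=ℝ) J; linarith
    have := one_div_le_one_div_of_le h1 h2
    linarith
  rw [hasSum_iff_tendsto_nat_of_nonneg hnn]
  have key : ∀ N : ℕ, ∑ k ∈ Finset.range N, (1/((k:ℝ)+1) - 1/((k:ℝ)+1+(J:ℝ)))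
      = H J - ∑ i ∈ Finset.range J, 1/((N:ℝ)+(i:ℝ)+1) := by
    intro N
    induction N with
    | zero => simp [H_eq]
    | succ N ih =>
      rw [Finset.sum_range_succ, ih]
      have tel : ∑ i ∈ Finset.range J, (1/((N:ℝ)+(i:ℝ)+1) - 1/((N:ℝ)+(i:ℝ)+2))
          = 1/((N:ℝ)+1) - 1/((N:ℝ)+(J:ℝ)+1) := by
        have := Finset.sum_range_sub' (f := fun i => 1/((N:ℝ)+(i:ℝ)+1)) J
        simp only [Nat.cast_zero, Nat.cast_add, Nat.cast_one] at this ⊢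
        convert this using 2 with i
        · ring_nf
        · ring_nf
      rw [Finset.sum_sub_distrib] at tel
      push_cast
      have : ∑ i ∈ Finset.range J, 1/((N:ℝ)+1+(i:ℝ)+1)
          = ∑ i ∈ Finset.range J, 1/((N:ℝ)+(i:ℝ)+2) := by
        apply Finset.sum_congr rfl; intro i _; ring_nf
      rw [this]
      have e : 1/((N:ℝ)+1+(J:ℝ)) = 1/((N:ℝ)+(J:ℝ)+1) := by ring_nf
      linarith [tel, e]
  have hr : Tendsto (fun N : ℕ => ∑ i ∈ Finset.range J, 1/((N:ℝ)+(i:ℝ)+1)) atTop (nhds 0) := by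
    have hb : Tendsto (fun N : ℕ => (J:ℝ)*(1/((N:ℝ)+1))) atTop (nhds 0) := by
      simpa using tendsto_one_div_add_atTop_nhds_zero_nat.const_mul (J:ℝ)
    refine squeeze_zero (fun N => Finset.sum_nonneg fun i _ => by positivity) (fun N => ?_) hb
    calc ∑ i ∈ Finset.range J, 1/((N:ℝ)+(i:ℝ)+1)
        ≤ ∑ i ∈ Finset.range J, 1/((N:ℝ)+1) := by
          apply Finset.sum_le_sum; intro i _
          apply one_div_le_one_div_of_le (by positivity)
          have := Nat.cast_nonneg (α:=ℝ) i; linarith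
      _ = (J:ℝ)*(1/((N:ℝ)+1)) := by
          rw [Finset.sum_const, Finset.card_range, nsmul_eq_mul]
  have := (tendsto_const_nhds (x := H J) (f := atTop)).sub hr
  simp only [sub_zero] at this
  exact Tendsto.congr (fun N => (key N).symm) this

noncomputable def F (p : ℕ × ℕ) : ℝ :=
  1/(((p.1:ℝ)+1) * ((p.2:ℝ)+1) * ((p.1:ℝ)+(p.2:ℝ)+2))

noncomputable def U (p : ℕ × ℕ) : ℝ :=
  1/(((p.1:ℝ)+1) * ((p.1:ℝ)+(p.2:ℝ)+2)^2)

lemma F_nonneg (p : ℕ × ℕ) : 0 ≤ F p := by unfold F; positivity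
lemma U_nonneg (p : ℕ × ℕ) : 0 ≤ U p := by unfold U; positivity

lemma innerF (j : ℕ) : HasSum (fun k => F (j,k)) (H (j+1) / ((j:ℝ)+1)^2) := by
  have h := (tele (j+1)).mul_left (1/((j:ℝ)+1)^2)
  have hc : ∀ k : ℕ, 1/((j:ℝ)+1)^2 * (1/((k:ℝ)+1) - 1/((k:ℝ)+1+((j:ℕ)+1:ℕ))) = F (j,k) := by
    intro k
    have h1 : ((j:ℝ)+1) ≠ 0 := by positivity
    have h2 : ((k:ℝ)+1) ≠ 0 := by positivity
    have h3 : ((j:ℝ)+(k:ℝ)+2) ≠ 0 := by positivity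
    unfold F
    push_cast
    field_simp
    ring
  have heq : (fun k => F (j,k)) = fun k : ℕ => 1/((j:ℝ)+1)^2 * (1/((k:ℝ)+1) - 1/((k:ℝ)+1+((j:ℕ)+1:ℕ))) := (funext hc).symm
  rw [heq]
  convert h using 1
  · rfl
  ring

lemma F_summable : Summable F := by
  rw [summable_prod_of_nonneg F_nonneg]
  constructor
  · exact fun j => (innerF j).summable
  · refine sumE.congr fun j => ?_
    exact ((innerF j).tsum_eq).symm

noncomputable def E : ℝ := ∑' n : ℕ, H (n+1) / ((n:ℝ)+1)^2

lemma hE : HasSum (fun n : ℕ => H (n+1) / ((n:ℝ)+1)^2) E := sumE.hasSum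

lemma hFE : HasSum F E := by
  have h1 : HasSum F (∑' p, F p) := F_summable.hasSum
  have h2 := h1.prod_fiberwise (fun j => innerF j)
  have : (∑' p, F p) = E := h2.unique hE
  rwa [this] at h1

lemma U_le_F (p : ℕ × ℕ) : U p ≤ F p := by
  obtain ⟨j,k⟩ := p
  unfold U F
  simp only
  apply one_div_le_one_div_of_le (by positivity)
  have hj : (0:ℝ) ≤ (j:ℝ) := Nat.cast_nonneg j
  have hk : (0:ℝ) ≤ (k:ℝ) := Nat.cast_nonneg k
  have key : (0:ℝ) ≤ ((j:ℝ)+1) * ((j:ℝ)+(k:ℝ)+2) * ((j:ℝ)+1) := by positivity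
  nlinarith [key]

lemma U_summable : Summable U := F_summable.of_nonneg_of_le U_nonneg U_le_F

noncomputable def Uval : ℝ := ∑' p, U p

lemma hU : HasSum U Uval := U_summable.hasSum

lemma hUswap : HasSum (fun p : ℕ × ℕ => U p.swap) Uval := by
  have := ((Equiv.prodComm ℕ ℕ).hasSum_iff (f := U) (a := Uval)).mpr hU
  exact this

lemma E_eq_two_U : E = 2 * Uval := by
  have hsum : HasSum (fun p : ℕ × ℕ => U p + U p.swap) (Uval + Uval) := hU.add hUswap
  have heq : ∀ p : ℕ × ℕ, U p + U p.swap = F p := by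
    rintro ⟨j,k⟩
    unfold U F
    simp only [Prod.swap_prod_mk]
    have h1 : ((j:ℝ)+1) ≠ 0 := by positivity
    have h2 : ((k:ℝ)+1) ≠ 0 := by positivity
    have h3 : ((j:ℝ)+(k:ℝ)+2) ≠ 0 := by positivity
    have h4 : ((k:ℝ)+(j:ℝ)+2) ≠ 0 := by positivity
    field_simp
    ring
  rw [funext heq] at hsum
  have := hsum.unique hFE
  linarith

noncomputable def G (p : ℕ × ℕ) : ℝ :=
  if p.1 < p.2 then 1/(((p.1:ℝ)+1) * ((p.2:ℝ)+1)^2) else 0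

lemma hGU : HasSum G Uval := by
  have hinj : Function.Injective (fun p : ℕ × ℕ => (p.1, p.1+p.2+1)) := by
    rintro ⟨a,b⟩ ⟨c,d⟩ h
    simp only [Prod.mk.injEq] at h
    obtain ⟨h1, h2⟩ := h
    subst h1; simp; omega
  have hvanish : ∀ x ∉ Set.range (fun p : ℕ × ℕ => (p.1, p.1+p.2+1)), G x = 0 := by
    rintro ⟨j,n⟩ hx
    by_contra hne
    have hlt : j < n := by
      by_contra h
      exact hne (if_neg h)
    refine hx ⟨(j, n-j-1), ?_⟩
    show (j, j+(n-j-1)+1) = (j,n)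
    congr 1
    omega
  refine (Function.Injective.hasSum_iff hinj hvanish).mp ?_
  have hcomp : ∀ p : ℕ × ℕ, (G ∘ fun p : ℕ × ℕ => (p.1, p.1+p.2+1)) p = U p := by
    rintro ⟨j,k⟩
    simp only [Function.comp, G, U]
    rw [if_pos (by omega)]
    push_cast
    ring_nf
  rw [funext hcomp]
  exact hU

lemma hGfiber (n : ℕ) : HasSum (fun j => G (j,n)) (H n / ((n:ℝ)+1)^2) := by
  have h0 : ∀ j ∉ Finset.range n, G (j,n) = 0 := by
    intro j hj
    simp only [Finset.mem_range, not_lt] at hj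
    exact if_neg (by omega)
  have h := hasSum_sum_of_ne_finset_zero (L := SummationFilter.unconditional ℕ) h0
  convert h using 1
  rw [H_eq, Finset.sum_div]
  apply Finset.sum_congr rfl
  intro j hj
  simp only [Finset.mem_range] at hj
  rw [G, if_pos (by simpa using hj)]
  simp only
  rw [div_div]

lemma hU2 : HasSum (fun n : ℕ => H n / ((n:ℝ)+1)^2) Uval := by
  have hswap : HasSum (fun p : ℕ × ℕ => G p.swap) Uval := by
    exact ((Equiv.prodComm ℕ ℕ).hasSum_iff (f := G) (a := Uval)).mpr hGU
  exact hswap.prod_fiberwise (fun n => hGfiber n)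

lemma hU3 : HasSum (fun n : ℕ => H n / ((n:ℝ)+1)^2) (E - z3) := by
  have h1 := hE.sub hz3
  have : ∀ n : ℕ, H (n+1) / ((n:ℝ)+1)^2 - 1/((n:ℝ)+1)^3 = H n / ((n:ℝ)+1)^2 := by
    intro n
    rw [H_succ n]
    have h2 : ((n:ℝ)+1) ≠ 0 := by positivity
    field_simp
    ring
  rwa [funext this] at h1

lemma E_val : E = 2 * z3 := by
  have := hU2.unique hU3
  have h2 := E_eq_two_U
  linarith

noncomputable def a (k : ℕ) : ℝ := H (k+1)^2 / (((k:ℝ)+1) * ((k:ℝ)+2))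

lemma psum (N : ℕ) : ∑ k ∈ Finset.range N, a k
    = 2 * ∑ k ∈ Finset.range N, H (k+1)/((k:ℝ)+1)^2
      - ∑ k ∈ Finset.range N, 1/((k:ℝ)+1)^3 - H N ^2 / ((N:ℝ)+1) := by
  induction N with
  | zero => simp [H_eq]
  | succ N ih =>
    rw [Finset.sum_range_succ, Finset.sum_range_succ, Finset.sum_range_succ, ih]
    have hHN : H N = H (N+1) - 1/((N:ℝ)+1) := by rw [H_succ]; ring
    rw [hHN]
    unfold a
    have h1 : ((N:ℝ)+1) ≠ 0 := by positivity
    have h2 : ((N:ℝ)+2) ≠ 0 := by positivity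
    push_cast
    field_simp
    ring

lemma tail_tendsto : Tendsto (fun N : ℕ => H N ^2 / ((N:ℝ)+1)) atTop (nhds 0) := by
  have hb : Tendsto (fun N : ℕ => 1/((N:ℝ)+1) + 2*(Real.log N / (1*(N:ℝ)+1))
      + (Real.log N)^2 / (1*(N:ℝ)+1)) atTop (nhds 0) := by
    have t1 : Tendsto (fun N : ℕ => 1/((N:ℝ)+1)) atTop (nhds 0) :=
      tendsto_one_div_add_atTop_nhds_zero_nat
    have t2 : Tendsto (fun N : ℕ => Real.log N / (1*(N:ℝ)+1)) atTop (nhds 0) :=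
      (Real.tendsto_pow_log_div_mul_add_atTop 1 1 1 one_ne_zero).comp
        tendsto_natCast_atTop_atTop |>.congr (fun N => by simp)
    have t3 : Tendsto (fun N : ℕ => (Real.log N)^2 / (1*(N:ℝ)+1)) atTop (nhds 0) :=
      (Real.tendsto_pow_log_div_mul_add_atTop 1 1 2 one_ne_zero).comp
        tendsto_natCast_atTop_atTop |>.congr (fun N => by simp)
    have := (t1.add (t2.const_mul 2)).add t3
    simpa using this
  refine squeeze_zero (fun N => by positivity) (fun N => ?_) hb
  set L := Real.log N with hL
  have hx : (0:ℝ) < (N:ℝ)+1 := by positivity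
  have hL0 : 0 ≤ L := by
    rcases Nat.eq_zero_or_pos N with h | h
    · subst h; simp [hL]
    · exact Real.log_nonneg (by exact_mod_cast h)
  have h1 : H N ^ 2 ≤ (1 + L)^2 := by
    have := H_le_log N
    nlinarith [H_nonneg N]
  calc H N ^2 / ((N:ℝ)+1) ≤ (1+L)^2 / ((N:ℝ)+1) := by gcongr
    _ = 1/((N:ℝ)+1) + 2*(L / (1*(N:ℝ)+1)) + L^2 / (1*(N:ℝ)+1) := by
        field_simp
        ring

lemma a_nonneg (k : ℕ) : 0 ≤ a k := by
  unfold a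
  have := H_nonneg (k+1)
  positivity

lemma main_real : HasSum a (3 * z3) := by
  rw [hasSum_iff_tendsto_nat_of_nonneg a_nonneg]
  have hT := hE.tendsto_sum_nat
  have hZ := hz3.tendsto_sum_nat
  have hlim : Tendsto (fun N : ℕ => 2 * ∑ k ∈ Finset.range N, H (k+1)/((k:ℝ)+1)^2
      - ∑ k ∈ Finset.range N, 1/((k:ℝ)+1)^3 - H N ^2 / ((N:ℝ)+1)) atTop
      (nhds (2*E - z3 - 0)) :=
    ((hT.const_mul 2).sub hZ).sub tail_tendsto
  have : 2*E - z3 - 0 = 3 * z3 := by rw [E_val]; ring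
  rw [this] at hlim
  exact Tendsto.congr (fun N => (psum N).symm) hlim

lemma zeta3_eq : riemannZeta 3 = ((z3 : ℝ) : ℂ) := by
  rw [show (3:ℂ) = ((3:ℕ):ℂ) by norm_num, zeta_nat_eq_tsum_of_gt_one (by norm_num : 1 < 3)]
  have hre : HasSum (fun n : ℕ => 1/(n:ℝ)^3) z3 := by
    apply (hasSum_nat_add_iff' (f := fun n : ℕ => 1/(n:ℝ)^3) 1).mp
    have h1 : (∑ i ∈ Finset.range 1, 1/((i:ℕ):ℝ)^3) = 0 := by norm_num
    rw [h1, sub_zero]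
    refine hz3.congr fun n => ?_
    push_cast
    ring
  have hc : HasSum (fun n : ℕ => 1/(n:ℂ)^3) (((z3:ℝ)):ℂ) := by
    have := Complex.hasSum_ofReal.mpr hre
    refine this.congr fun n => ?_
    push_cast
    ring
  exact hc.tsum_eq

theorem euler_sum_12 :
    HasSum (fun k : ℕ => (H (k+1) : ℂ) ^ 2 / (((k : ℂ) + 1) * ((k : ℂ) + 2))) (3 * riemannZeta 3) := by
  have h := Complex.hasSum_ofReal.mpr main_real
  have hv : ((3 * z3 : ℝ) : ℂ) = 3 * riemannZeta 3 := by
    rw [zeta3_eq]; push_cast; ring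
  rw [hv] at h
  refine h.congr fun k => ?_
  unfold a
  push_cast
  ring
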